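/- The creation map Φ is injective on each sign class of the normal relative velocity: Φ restricted to D⁺ = {(s, ω, p̂) ∈ (0,t) × S² × ℝ³ : ω·(p̂ − w) > 0} is injective, and Φ restricted to D⁻ = {(s, ω, p̂) ∈ (0,t) × S² × ℝ³ : ω·(p̂ − w) < 0} is injective. -/

import Mathlib

noncomputable section

/-- Position/momentum space `ℝ³`. -/
abbrev R3 : Type := EuclideanSpace ℝ (Fin 3)

/-- The unit sphere `S² ⊂ ℝ³`. -/
abbrev Sph : Type := Metric.sphere (0 : R3) 1

/-- The creation map `Φ(s, ω, p̂) = (x + w s + a ω + (t − s) p̂, p̂)`. -/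
noncomputable def creation (a t : ℝ) (x w : R3) : ℝ × Sph × R3 → R3 × R3 :=
  fun u => (x + u.1 • w + a • (u.2.1 : R3) + (t - u.1) • u.2.2, u.2.2)

lemma aux_key (a : ℝ) (ha : 0 < a) (ω₁ ω₂ : R3) (h₁ : ‖ω₁‖ = 1) (h₂ : ‖ω₂‖ = 1)
    (δ : ℝ) (v : R3) (heq : a • ω₁ - a • ω₂ = δ • v)
    (hp₁ : 0 < (inner ℝ ω₁ v : ℝ)) (hp₂ : 0 < (inner ℝ ω₂ v : ℝ)) :
    δ = 0 ∧ ω₁ = ω₂ := by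
  have h0 : (inner ℝ (ω₁ + ω₂) (a • ω₁ - a • ω₂) : ℝ) = 0 := by
    rw [inner_add_left, inner_sub_right, inner_sub_right, inner_smul_right, inner_smul_right,
      inner_smul_right, inner_smul_right, real_inner_self_eq_norm_sq,
      real_inner_self_eq_norm_sq, h₁, h₂, real_inner_comm ω₂ ω₁]
    ring
  have h1 : δ * ((inner ℝ ω₁ v : ℝ) + (inner ℝ ω₂ v : ℝ)) = 0 := by
    rw [heq] at h0
    rw [inner_add_left, inner_smul_right, inner_smul_right] at h0
    linarith
  have hδ : δ = 0 := by
    rcases mul_eq_zero.mp h1 with h | h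
    · exact h
    · linarith
  refine ⟨hδ, ?_⟩
  rw [hδ, zero_smul, sub_eq_zero] at heq
  exact smul_right_injective R3 (ne_of_gt ha) heq

theorem stmt10 (a t : ℝ) (ha : 0 < a) (ht : 0 < t) (x w : R3) :
    Set.InjOn (creation a t x w)
      {u : ℝ × Sph × R3 | u.1 ∈ Set.Ioo 0 t ∧
        0 < (inner ℝ ((u.2.1 : R3)) (u.2.2 - w) : ℝ)} ∧
    Set.InjOn (creation a t x w)
      {u : ℝ × Sph × R3 | u.1 ∈ Set.Ioo 0 t ∧
        (inner ℝ ((u.2.1 : R3)) (u.2.2 - w) : ℝ) < 0} := by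
  constructor
  · rintro ⟨s₁, ω₁, p₁⟩ h1 ⟨s₂, ω₂, p₂⟩ h2 heq
    simp only [creation, Prod.mk.injEq] at heq
    obtain ⟨hpos, hp⟩ := heq
    subst hp
    have key : a • (ω₁ : R3) - a • (ω₂ : R3) = (s₁ - s₂) • (p₁ - w) := by
      linear_combination (norm := module) hpos
    have hn₁ : ‖(ω₁ : R3)‖ = 1 := by simpa using mem_sphere_zero_iff_norm.mp ω₁.2
    have hn₂ : ‖(ω₂ : R3)‖ = 1 := by simpa using mem_sphere_zero_iff_norm.mp ω₂.2
    obtain ⟨hδ, hω⟩ := aux_key a ha _ _ hn₁ hn₂ _ _ key h1.2 h2.2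
    have hs : s₁ = s₂ := by linarith [sub_eq_zero.mp hδ]
    exact Prod.ext hs (Prod.ext (Subtype.ext hω) rfl)
  · rintro ⟨s₁, ω₁, p₁⟩ h1 ⟨s₂, ω₂, p₂⟩ h2 heq
    simp only [creation, Prod.mk.injEq] at heq
    obtain ⟨hpos, hp⟩ := heq
    subst hp
    have key : a • (ω₁ : R3) - a • (ω₂ : R3) = (s₂ - s₁) • (w - p₁) := by
      linear_combination (norm := module) hpos
    have hn₁ : ‖(ω₁ : R3)‖ = 1 := by simpa using mem_sphere_zero_iff_norm.mp ω₁.2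
    have hn₂ : ‖(ω₂ : R3)‖ = 1 := by simpa using mem_sphere_zero_iff_norm.mp ω₂.2
    have hq₁ : 0 < (inner ℝ (ω₁ : R3) (w - p₁) : ℝ) := by
      have := h1.2
      rw [inner_sub_right] at this ⊢
      linarith
    have hq₂ : 0 < (inner ℝ (ω₂ : R3) (w - p₁) : ℝ) := by
      have := h2.2
      rw [inner_sub_right] at this ⊢
      linarith
    obtain ⟨hδ, hω⟩ := aux_key a ha _ _ hn₁ hn₂ _ _ key hq₁ hq₂
    have hs : s₁ = s₂ := by linarith [sub_eq_zero.mp hδ]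
    exact Prod.ext hs (Prod.ext (Subtype.ext hω) rfl)

end
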